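/- Let G be a graph, and suppose that for every shortest even hole C of G there is a vertex v ∈ V(C) with J_G(C) ⊆ N_G(v), or G[J_G(C)] is a clique disjoint from C. Then the family consisting of the sets N_G(v) ∖ {u,w} over all 2-edge paths u v w of G, together with the vertex sets of all maximal cliques of G, has the property that some shortest even hole C of G is clear (J_{G−X}(C) = ∅ and C ⊆ G − X) in G − X for at least one set X in the family. -/

import Mathlib

open SimpleGraph

variable {V : Type*}

def IsHole (G : SimpleGraph V) {v : V} (C : G.Walk v v) : Prop :=
  C.IsCycle ∧ 4 ≤ C.length ∧
    ∀ x y : V, x ∈ C.support → y ∈ C.support → G.Adj x y → s(x, y) ∈ C.edges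

def IsShortestEvenHole (G : SimpleGraph V) {v : V} (C : G.Walk v v) : Prop :=
  IsHole G C ∧ Even C.length ∧
    ∀ (w : V) (D : G.Walk w w), IsHole G D → Even D.length → C.length ≤ D.length

/-- `J_G(C)`: vertices `x` such that `N_G(x) ∩ V(C)` contains three pairwise
non-adjacent vertices. -/
def JSet (G : SimpleGraph V) {v : V} (C : G.Walk v v) : Set V :=
  {x | ∃ a b c : V, a ≠ b ∧ a ≠ c ∧ b ≠ c ∧
    ¬ G.Adj a b ∧ ¬ G.Adj a c ∧ ¬ G.Adj b c ∧
    a ∈ C.support ∧ b ∈ C.support ∧ c ∈ C.support ∧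
    G.Adj x a ∧ G.Adj x b ∧ G.Adj x c}

/-- In a path starting at `u` whose support avoids repeating `u`, the only edge at `u`
goes to the second vertex. -/
lemma edge_head_eq {G : SimpleGraph V} {u w v z : V} (h : G.Adj u w) (q : G.Walk w v)
    (hnd : u ∉ q.support) (hz : s(u, z) ∈ (q.cons h).edges) : z = w := by
  rw [SimpleGraph.Walk.edges_cons, List.mem_cons] at hz
  rcases hz with hz | hz
  · rcases Sym2.eq_iff.mp hz with ⟨-, rfl⟩ | ⟨rfl, rfl⟩
    · rfl
    · exact absurd rfl h.ne
  · exact absurd (q.fst_mem_support_of_mem_edges hz) hnd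

/-- At its basepoint, a cycle has exactly two neighbors along its edges. -/
lemma cycle_edge_start {G : SimpleGraph V} {x : V} (D : G.Walk x x) (hD : D.IsCycle) :
    ∃ u w', u ≠ w' ∧ s(x, u) ∈ D.edges ∧ s(x, w') ∈ D.edges ∧
      ∀ z, s(x, z) ∈ D.edges → z = u ∨ z = w' := by
  cases D with
  | nil => exact absurd rfl hD.ne_nil
  | cons h q =>
    rename_i b
    have hnodup : q.support.Nodup := by
      have := hD.support_nodup
      simpa using this
    have hedges : (q.cons h).edges = s(x, b) :: q.edges := SimpleGraph.Walk.edges_cons h q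
    have hen : (q.cons h).edges.Nodup := hD.isTrail.edges_nodup
    have hxb_notin : s(x, b) ∉ q.edges := by
      rw [hedges] at hen
      exact (List.nodup_cons.mp hen).1
    obtain ⟨w', hadj, r, hrev⟩ := SimpleGraph.Walk.exists_eq_cons_of_ne h.ne q.reverse
    have hrevsup : q.reverse.support.Nodup := by
      rw [SimpleGraph.Walk.support_reverse]
      exact List.nodup_reverse.mpr hnodup
    have hxr : x ∉ r.support := by
      rw [hrev, SimpleGraph.Walk.support_cons] at hrevsup
      exact (List.nodup_cons.mp hrevsup).1
    have hw'q : s(x, w') ∈ q.edges := by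
      have : s(x, w') ∈ q.reverse.edges := by
        rw [hrev, SimpleGraph.Walk.edges_cons]
        exact List.mem_cons_self
      rwa [SimpleGraph.Walk.edges_reverse, List.mem_reverse] at this
    have hbw' : b ≠ w' := by
      rintro rfl
      exact hxb_notin hw'q
    refine ⟨b, w', hbw', by rw [hedges]; exact List.mem_cons_self,
      by rw [hedges]; exact List.mem_cons_of_mem _ hw'q, ?_⟩
    intro z hz
    rw [hedges, List.mem_cons] at hz
    rcases hz with hz | hz
    · rcases Sym2.eq_iff.mp hz with ⟨-, rfl⟩ | ⟨rfl, rfl⟩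
      · exact Or.inl rfl
      · exact absurd rfl h.ne
    · right
      have : s(x, z) ∈ q.reverse.edges := by
        rwa [SimpleGraph.Walk.edges_reverse, List.mem_reverse]
      rw [hrev] at this
      exact edge_head_eq hadj r hxr this

/-- Every vertex on a cycle has exactly two neighbors along the cycle edges. -/
lemma cycle_nbrs {G : SimpleGraph V} {v x : V} (C : G.Walk v v) (hC : C.IsCycle)
    (hx : x ∈ C.support) :
    ∃ u w', u ≠ w' ∧ s(x, u) ∈ C.edges ∧ s(x, w') ∈ C.edges ∧
      ∀ z, s(x, z) ∈ C.edges → z = u ∨ z = w' := by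
  classical
  obtain ⟨u, w', hne, h1, h2, h3⟩ := cycle_edge_start (C.rotate x hx) (hC.rotate hx)
  have hperm := (C.rotate_edges x hx).perm
  exact ⟨u, w', hne, hperm.mem_iff.mp h1, hperm.mem_iff.mp h2,
    fun z hz => h3 z (hperm.mem_iff.mpr hz)⟩

/-- No vertex of a hole belongs to its `J`-set. -/
lemma not_mem_jset {G : SimpleGraph V} {v z : V} {C : G.Walk v v} (hC : IsHole G C)
    (hz : z ∈ C.support) : z ∉ JSet G C := by
  obtain ⟨u, w', hne, _, _, huniq⟩ := cycle_nbrs C hC.1 hz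
  rintro ⟨a, b, c, hab, hac, hbc, _, _, _, ha, hb, hc, hza, hzb, hzc⟩
  have pa := huniq a (hC.2.2 z a hz ha hza)
  have pb := huniq b (hC.2.2 z b hz hb hzb)
  have pc := huniq c (hC.2.2 z c hz hc hzc)
  rcases pa with rfl | rfl <;> rcases pb with rfl | rfl <;> rcases pc with rfl | rfl <;>
    simp_all

/-- The punctured-neighborhood construction: if some vertex `x` of the hole is adjacent
to everything in `J`, then `N(x) \ {u, w'}` with `u, w'` the cycle neighbors of `x`
works. -/
lemma constructionA {G : SimpleGraph V} {v x : V} {C : G.Walk v v}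
    (hC : IsShortestEvenHole G C) (hx : x ∈ C.support)
    (hJ : ∀ j ∈ JSet G C, G.Adj x j) :
    ∃ X : Set V, (∃ u x' w' : V, G.Adj u x' ∧ G.Adj x' w' ∧ u ≠ w' ∧
      X = G.neighborSet x' \ {u, w'}) ∧ (∀ z ∈ C.support, z ∉ X) ∧ JSet G C ⊆ X := by
  obtain ⟨u, w', hne, he1, he2, huniq⟩ := cycle_nbrs C hC.1.1 hx
  refine ⟨G.neighborSet x \ {u, w'},
    ⟨u, x, w', (C.adj_of_mem_edges he1).symm, C.adj_of_mem_edges he2, hne, rfl⟩, ?_, ?_⟩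
  · rintro z hzsup ⟨hadj, hzm⟩
    apply hzm
    have : G.Adj x z := hadj
    rcases huniq z (hC.1.2.2 x z hx hzsup this) with rfl | rfl
    · exact Set.mem_insert _ _
    · exact Set.mem_insert_of_mem _ rfl
  · intro j hj
    refine ⟨hJ j hj, ?_⟩
    intro hm
    have hjsup : j ∈ C.support := by
      simp only [Set.mem_insert_iff, Set.mem_singleton_iff] at hm
      rcases hm with rfl | rfl
      · exact C.snd_mem_support_of_mem_edges he1
      · exact C.snd_mem_support_of_mem_edges he2
    exact not_mem_jset hC.1 hjsup hj

/-- Correctness of Lemma 4.1: some shortest even hole of `G` is clear in `G − X` for a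
set `X` in the family of punctured neighborhoods of 2-paths and of maximal cliques. -/
theorem stmt11 [Fintype V] (G : SimpleGraph V)
    (hex : ∃ (w : V) (C : G.Walk w w), IsShortestEvenHole G C)
    (hhyp : ∀ (w : V) (C : G.Walk w w), IsShortestEvenHole G C →
      (∃ x ∈ C.support, JSet G C ⊆ G.neighborSet x) ∨
      (G.IsClique (JSet G C) ∧ ∀ z ∈ C.support, z ∉ JSet G C)) :
    ∃ (w : V) (C : G.Walk w w) (X : Set V),
      IsShortestEvenHole G C ∧
      ((∃ u x w' : V, G.Adj u x ∧ G.Adj x w' ∧ u ≠ w' ∧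
          X = G.neighborSet x \ {u, w'}) ∨
       (∃ K : Set V, G.IsClique K ∧ (∀ K', G.IsClique K' → K ⊆ K' → K' = K) ∧
          X = K)) ∧
      (∀ z ∈ C.support, z ∉ X) ∧ JSet G C ⊆ X := by
  obtain ⟨w, C, hC⟩ := hex
  by_cases hA : ∃ x ∈ C.support, ∀ j ∈ JSet G C, G.Adj x j
  · obtain ⟨x, hx, hJ⟩ := hA
    obtain ⟨X, h1, h2, h3⟩ := constructionA hC hx hJ
    exact ⟨w, C, X, hC, Or.inl h1, h2, h3⟩
  · have hclq : G.IsClique (JSet G C) := by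
      rcases hhyp w C hC with ⟨x, hx, hsub⟩ | ⟨h, _⟩
      · exact absurd ⟨x, hx, fun j hj => hsub hj⟩ hA
      · exact h
    set S : Set (Set V) := {K | G.IsClique K ∧ JSet G C ⊆ K ∧ ∀ z ∈ C.support, z ∉ K}
      with hS
    have hJS : JSet G C ∈ S := ⟨hclq, subset_rfl, fun z hz => not_mem_jset hC.1 hz⟩
    obtain ⟨K, hKS, hKmax⟩ :=
      Set.Finite.exists_maximalFor id S (Set.toFinite S) ⟨_, hJS⟩
    have hmax : ∀ K', G.IsClique K' → K ⊆ K' → K' = K := by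
      intro K' hK' hKK'
      by_contra hne
      have hzex : ∃ z ∈ K', z ∉ K := by
        by_contra hcon
        push_neg at hcon
        exact hne (subset_antisymm hcon hKK')
      obtain ⟨z, hzK', hzK⟩ := hzex
      have hzsup : z ∉ C.support := by
        intro hzs
        apply hA
        refine ⟨z, hzs, fun j hj => ?_⟩
        have hjK' : j ∈ K' := hKK' (hKS.2.1 hj)
        have hjz : z ≠ j := fun h => not_mem_jset hC.1 hzs (h ▸ hj)
        exact hK' hzK' hjK' hjz
      have hKz : insert z K ∈ S := by
        refine ⟨hK'.subset (Set.insert_subset hzK' hKK'),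
          hKS.2.1.trans (Set.subset_insert _ _), ?_⟩
        intro y hy hyK
        rcases Set.mem_insert_iff.mp hyK with rfl | hyK'
        · exact hzsup hy
        · exact hKS.2.2 y hy hyK'
      have heq : K = insert z K := subset_antisymm (Set.subset_insert z K) (hKmax hKz (Set.subset_insert z K))
      exact hzK (heq ▸ Set.mem_insert z K)
    exact ⟨w, C, K, hC, Or.inr ⟨K, hKS.1, hmax, rfl⟩, hKS.2.2, hKS.2.1⟩
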